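/- Fix t ≥ 3 and a disjoint vertex partition V = V_L ∪ V_N ∪ V_S with |V_L| = |V_N| = m. Consider any simple t-uniform hypergraph H on V whose degree sum over V_L equals m·C(2m−1, t−1) + |V_S|·d·(t−1) and whose degree sum over V_S equals |V_S|·d. Then H contains all C(m, t) edges inside V_L, all C(2m, t) − C(m, t) − C(m, t) edges meeting both V_L and V_N within V_L ∪ V_N, every edge meeting V_S contains exactly one vertex of V_S and t−1 vertices of V_L, and no edge contains vertices of both V_N and V_S. Consequently, the edges of H contained entirely in V_N form a t-uniform hypergraph realizing the residual degrees on V_N. -/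

import Mathlib

def hdeg {V : Type*} [DecidableEq V] (H : Finset (Finset V)) (v : V) : ℕ :=
  (H.filter (fun e => v ∈ e)).card

section helpers
variable {V : Type*} [DecidableEq V]

lemma sum_hdeg (H : Finset (Finset V)) (A : Finset V) :
    ∑ v ∈ A, hdeg H v = ∑ e ∈ H, (e ∩ A).card := by
  simp only [hdeg, Finset.card_filter]
  rw [Finset.sum_comm]
  refine Finset.sum_congr rfl fun e _ => ?_
  rw [← Finset.card_filter]
  congr 1
  ext v; simp [Finset.mem_inter, and_comm]

lemma card_filter_mem_pows (s : Finset V) (v : V) (hv : v ∈ s) (k : ℕ) :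
    ((s.powersetCard (k+1)).filter (fun A => v ∈ A)).card
      = (s.card - 1).choose k := by
  rw [← Finset.card_erase_of_mem hv, ← Finset.card_powersetCard]
  apply Finset.card_nbij' (fun A => A.erase v) (fun B => insert v B)
  · intro A hA
    simp only [Finset.mem_coe, Finset.mem_filter, Finset.mem_powersetCard] at hA
    simp only [Finset.mem_coe, Finset.mem_powersetCard]
    exact ⟨fun x hx => Finset.mem_erase.2 ⟨(Finset.mem_erase.1 hx).1,
      hA.1.1 (Finset.mem_erase.1 hx).2⟩,
      by rw [Finset.card_erase_of_mem hA.2, hA.1.2]; rfl⟩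
  · intro B hB
    simp only [Finset.mem_coe, Finset.mem_powersetCard] at hB
    simp only [Finset.mem_coe, Finset.mem_filter, Finset.mem_powersetCard]
    have hvB : v ∉ B := fun h => (Finset.mem_erase.1 (hB.1 h)).1 rfl
    refine ⟨⟨?_, ?_⟩, Finset.mem_insert_self _ _⟩
    · intro x hx
      rcases Finset.mem_insert.1 hx with rfl | h
      · exact hv
      · exact (Finset.mem_erase.1 (hB.1 h)).2
    · rw [Finset.card_insert_of_notMem hvB, hB.2]
  · intro A hA
    simp only [Finset.mem_coe, Finset.mem_filter] at hA
    exact Finset.insert_erase hA.2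
  · intro B hB
    simp only [Finset.mem_coe, Finset.mem_powersetCard] at hB
    exact Finset.erase_insert (fun h => (Finset.mem_erase.1 (hB.1 h)).1 rfl)

lemma card_split (L N S : Finset V) [Fintype V]
    (hLN : Disjoint L N) (hLS : Disjoint L S) (hNS : Disjoint N S)
    (hcover : L ∪ N ∪ S = Finset.univ) (e : Finset V) :
    (e ∩ L).card + (e ∩ N).card + (e ∩ S).card = e.card := by
  have h1 : Disjoint (e ∩ L) (e ∩ N) := hLN.mono Finset.inter_subset_right Finset.inter_subset_right
  have h2 : Disjoint (e ∩ L ∪ e ∩ N) (e ∩ S) :=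
    Finset.disjoint_union_left.2 ⟨hLS.mono Finset.inter_subset_right Finset.inter_subset_right,
      hNS.mono Finset.inter_subset_right Finset.inter_subset_right⟩
  rw [← Finset.card_union_of_disjoint h1, ← Finset.card_union_of_disjoint h2,
    ← Finset.inter_union_distrib_left, ← Finset.inter_union_distrib_left, hcover,
    Finset.inter_univ]

end helpers

/-- Rigidity of the gadget: if the degree sums over `V_L` and `V_S` attain the extremal
values, then `H` contains all edges inside `V_L`, all mixed `V_L`–`V_N` edges, every
edge meeting `V_S` has exactly one `V_S`-vertex and `t-1` `V_L`-vertices, no edge meets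
both `V_N` and `V_S`, and the edges inside `V_N` realize the residual degrees on `V_N`. -/
theorem gadget_rigidity (t m d : ℕ) (ht : 3 ≤ t) (htm : t ≤ m) (hd : 0 < d)
    {V : Type*} [Fintype V] [DecidableEq V]
    (L N S : Finset V)
    (hLN : Disjoint L N) (hLS : Disjoint L S) (hNS : Disjoint N S)
    (hcover : L ∪ N ∪ S = Finset.univ)
    (hLcard : L.card = m) (hNcard : N.card = m)
    (H : Finset (Finset V)) (hH : ∀ e ∈ H, e.card = t)
    (hdegL : ∑ v ∈ L, hdeg H v
      = m * (2 * m - 1).choose (t - 1) + S.card * d * (t - 1))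
    (hdegS : ∑ v ∈ S, hdeg H v = S.card * d) :
    (∀ e : Finset V, e ⊆ L → e.card = t → e ∈ H) ∧
    (∀ e : Finset V, e ⊆ L ∪ N → e.card = t →
      (e ∩ L).Nonempty → (e ∩ N).Nonempty → e ∈ H) ∧
    (∀ e ∈ H, (e ∩ S).Nonempty → (e ∩ S).card = 1 ∧ (e ∩ L).card = t - 1) ∧
    (∀ e ∈ H, ¬ ((e ∩ N).Nonempty ∧ (e ∩ S).Nonempty)) ∧
    (∀ v ∈ N, hdeg (H.filter (fun e => e ⊆ N)) v
      + ((2 * m - 1).choose (t - 1) - (m - 1).choose (t - 1)) = hdeg H v) := by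
  classical
  have hesplit : ∀ e ∈ H, (e ∩ L).card + (e ∩ N).card + (e ∩ S).card = t := fun e he => by
    rw [card_split L N S hLN hLS hNS hcover e, hH e he]
  have hLNcard : (L ∪ N).card = 2 * m := by
    rw [Finset.card_union_of_disjoint hLN, hLcard, hNcard]; ring
  have hSempty : ∀ e : Finset V, e ∩ S = ∅ → e ⊆ L ∪ N := by
    intro e hS x hx
    have hx' : x ∈ L ∪ N ∪ S := hcover ▸ Finset.mem_univ x
    rcases Finset.mem_union.1 hx' with h | h
    · exact h
    · exact absurd (Finset.mem_inter.2 ⟨hx, h⟩) (by simp [hS])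
  -- the complete "pool" K of candidate edges in L ∪ N
  have hdegK : ∀ v ∈ L ∪ N,
      (((L ∪ N).powersetCard t).filter (fun A => v ∈ A)).card
        = (2 * m - 1).choose (t - 1) := by
    intro v hv
    have h3 : t - 1 + 1 = t := by omega
    rw [← h3, card_filter_mem_pows _ _ hv, hLNcard]
    simp
  have hsumK : ∑ A ∈ (L ∪ N).powersetCard t, (A ∩ L).card
      = m * (2 * m - 1).choose (t - 1) := by
    rw [← sum_hdeg]
    simp only [hdeg]
    rw [Finset.sum_congr rfl (fun v hv => hdegK v (Finset.mem_union_left _ hv))]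
    rw [Finset.sum_const, hLcard, smul_eq_mul]
  set H1 := H.filter (fun e => e ⊆ L ∪ N) with hH1def
  set H2 := H.filter (fun e => ¬ e ⊆ L ∪ N) with hH2def
  have hH1S : ∀ e ∈ H1, e ∩ S = ∅ := by
    intro e he
    rw [hH1def, Finset.mem_filter] at he
    apply Finset.eq_empty_of_forall_notMem
    intro x hx
    rcases Finset.mem_inter.1 hx with ⟨hxe, hxS⟩
    rcases Finset.mem_union.1 (he.2 hxe) with h | h
    · exact (Finset.disjoint_left.1 hLS) h hxS
    · exact (Finset.disjoint_left.1 hNS) h hxS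
  have hH2S : ∀ e ∈ H2, (e ∩ S).Nonempty := by
    intro e he
    rw [hH2def, Finset.mem_filter] at he
    rw [Finset.nonempty_iff_ne_empty]
    intro h
    exact he.2 (hSempty e h)
  have hmemSH2 : ∀ e ∈ H, (e ∩ S).Nonempty → e ∈ H2 := by
    intro e he hS
    rw [hH2def, Finset.mem_filter]
    refine ⟨he, fun hsub => ?_⟩
    obtain ⟨x, hx⟩ := hS
    rcases Finset.mem_inter.1 hx with ⟨hxe, hxS⟩
    rcases Finset.mem_union.1 (hsub hxe) with h | h
    · exact (Finset.disjoint_left.1 hLS) h hxS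
    · exact (Finset.disjoint_left.1 hNS) h hxS
  -- sums over S
  have hSsum : ∑ e ∈ H, (e ∩ S).card = S.card * d := by rw [← sum_hdeg, hdegS]
  have hSsplit : ∑ e ∈ H1, (e ∩ S).card + ∑ e ∈ H2, (e ∩ S).card
      = ∑ e ∈ H, (e ∩ S).card := Finset.sum_filter_add_sum_filter_not _ _ _
  have hS1zero : ∑ e ∈ H1, (e ∩ S).card = 0 :=
    Finset.sum_eq_zero (fun e he => by rw [hH1S e he]; rfl)
  have hS2 : ∑ e ∈ H2, (e ∩ S).card = S.card * d := by omega
  -- sums over L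
  have hLsplit : ∑ e ∈ H1, (e ∩ L).card + ∑ e ∈ H2, (e ∩ L).card
      = m * (2 * m - 1).choose (t - 1) + S.card * d * (t - 1) := by
    rw [Finset.sum_filter_add_sum_filter_not, ← sum_hdeg, hdegL]
  have hH1K : H1 ⊆ (L ∪ N).powersetCard t := by
    intro e he
    rw [hH1def, Finset.mem_filter] at he
    exact Finset.mem_powersetCard.2 ⟨he.2, hH e he.1⟩
  have hX : ∑ e ∈ H1, (e ∩ L).card ≤ m * (2 * m - 1).choose (t - 1) := by
    rw [← hsumK]
    exact Finset.sum_le_sum_of_subset hH1K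
  have hYpt : ∀ e ∈ H2, (e ∩ L).card ≤ (t - 1) * (e ∩ S).card := by
    intro e he
    have h1 := hesplit e (Finset.mem_of_mem_filter e he)
    have h2 := Finset.card_pos.2 (hH2S e he)
    have h3 : t - 1 ≤ (t - 1) * (e ∩ S).card := Nat.le_mul_of_pos_right _ h2
    omega
  have hY : ∑ e ∈ H2, (e ∩ L).card ≤ (t - 1) * (S.card * d) := by
    calc ∑ e ∈ H2, (e ∩ L).card ≤ ∑ e ∈ H2, (t - 1) * (e ∩ S).card :=
          Finset.sum_le_sum hYpt
      _ = (t - 1) * (S.card * d) := by rw [← Finset.mul_sum, hS2]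
  have hcomm : S.card * d * (t - 1) = (t - 1) * (S.card * d) := by ring
  have hXeq : ∑ e ∈ H1, (e ∩ L).card = m * (2 * m - 1).choose (t - 1) := by omega
  have hYeq : ∑ e ∈ H2, (e ∩ L).card = ∑ e ∈ H2, (t - 1) * (e ∩ S).card := by
    rw [← Finset.mul_sum, hS2]; omega
  -- pointwise equality on H2
  have hH2pt : ∀ e ∈ H2, (e ∩ L).card = (t - 1) * (e ∩ S).card :=
    fun e he => (Finset.sum_eq_sum_iff_of_le hYpt).1 hYeq e he
  have hH2struct : ∀ e ∈ H2, (e ∩ S).card = 1 ∧ (e ∩ L).card = t - 1 ∧ (e ∩ N).card = 0 := by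
    intro e he
    have h1 := hesplit e (Finset.mem_of_mem_filter e he)
    have h2 := Finset.card_pos.2 (hH2S e he)
    have h3 := hH2pt e he
    obtain ⟨s', hs'⟩ : ∃ s', (e ∩ S).card = 1 + s' := ⟨(e ∩ S).card - 1, by omega⟩
    have hexp : (t - 1) * (1 + s') = (t - 1) + (t - 1) * s' := by ring
    rw [hs'] at h3 h1 ⊢
    rw [hexp] at h3
    omega
  -- all candidate edges meeting L are present
  have hKall : ∀ A ∈ (L ∪ N).powersetCard t, (A ∩ L).Nonempty → A ∈ H := by
    intro A hA hAL
    by_contra hAH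
    have hA1 : A ∉ H1 := fun h => hAH (Finset.mem_of_mem_filter A h)
    have hsd : ∑ e ∈ (L ∪ N).powersetCard t \ H1, (e ∩ L).card = 0 := by
      have h := Finset.sum_sdiff (f := fun e => (e ∩ L).card) hH1K
      beta_reduce at h
      omega
    have := (Finset.sum_eq_zero_iff.1 hsd) A (Finset.mem_sdiff.2 ⟨hA, hA1⟩)
    rw [Finset.card_eq_zero] at this
    exact hAL.ne_empty this
  have claim2 : ∀ e : Finset V, e ⊆ L ∪ N → e.card = t →
      (e ∩ L).Nonempty → e ∈ H := by
    intro e hsub hcard hne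
    exact hKall e (Finset.mem_powersetCard.2 ⟨hsub, hcard⟩) hne
  have claim1 : ∀ e : Finset V, e ⊆ L → e.card = t → e ∈ H := by
    intro e hsub hcard
    refine claim2 e (hsub.trans Finset.subset_union_left) hcard ?_
    rw [Finset.inter_eq_left.2 hsub, ← Finset.card_pos, hcard]; omega
  have claim3 : ∀ e ∈ H, (e ∩ S).Nonempty → (e ∩ S).card = 1 ∧ (e ∩ L).card = t - 1 := by
    intro e he hS
    obtain ⟨h1, h2, _⟩ := hH2struct e (hmemSH2 e he hS)
    exact ⟨h1, h2⟩
  have claim4 : ∀ e ∈ H, ¬ ((e ∩ N).Nonempty ∧ (e ∩ S).Nonempty) := by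
    rintro e he ⟨hN, hS⟩
    obtain ⟨_, _, h3⟩ := hH2struct e (hmemSH2 e he hS)
    rw [Finset.card_eq_zero] at h3
    exact hN.ne_empty h3
  refine ⟨claim1, fun e h1 h2 h3 _ => claim2 e h1 h2 h3, claim3, claim4, ?_⟩
  -- residual degree identity
  intro v hv
  have hvLN : v ∈ L ∪ N := Finset.mem_union_right _ hv
  have hsplitdeg : hdeg (H.filter (fun e => e ⊆ N)) v
      + ((H.filter (fun e => v ∈ e)).filter (fun e => ¬ e ⊆ N)).card = hdeg H v := by
    rw [hdeg, hdeg]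
    rw [show (H.filter (fun e => e ⊆ N)).filter (fun e => v ∈ e)
        = (H.filter (fun e => v ∈ e)).filter (fun e => e ⊆ N) by
      ext e; simp only [Finset.mem_filter]; tauto]
    exact Finset.card_filter_add_card_filter_not (fun e => e ⊆ N)
  have hset : (H.filter (fun e => v ∈ e)).filter (fun e => ¬ e ⊆ N)
      = ((L ∪ N).powersetCard t).filter (fun A => v ∈ A ∧ (A ∩ L).Nonempty) := by
    ext e
    simp only [Finset.mem_filter, Finset.mem_powersetCard]
    constructor
    · rintro ⟨⟨he, hve⟩, hnsub⟩
      have heN : (e ∩ N).Nonempty := ⟨v, Finset.mem_inter.2 ⟨hve, hv⟩⟩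
      have heS : e ∩ S = ∅ := by
        rw [← Finset.not_nonempty_iff_eq_empty]
        exact fun h => claim4 e he ⟨heN, h⟩
      have hsub := hSempty e heS
      refine ⟨⟨hsub, hH e he⟩, hve, ?_⟩
      obtain ⟨x, hxe, hxN⟩ := Finset.not_subset.1 hnsub
      rcases Finset.mem_union.1 (hsub hxe) with h | h
      · exact ⟨x, Finset.mem_inter.2 ⟨hxe, h⟩⟩
      · exact absurd h hxN
    · rintro ⟨⟨hsub, hcard⟩, hve, hne⟩
      refine ⟨⟨claim2 e hsub hcard hne, hve⟩, ?_⟩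
      obtain ⟨x, hx⟩ := hne
      rcases Finset.mem_inter.1 hx with ⟨hxe, hxL⟩
      exact fun h => (Finset.disjoint_left.1 hLN) hxL (h hxe)
  have hsplitK : (((L ∪ N).powersetCard t).filter (fun A => v ∈ A ∧ (A ∩ L).Nonempty)).card
      + (((L ∪ N).powersetCard t).filter (fun A => v ∈ A ∧ ¬ (A ∩ L).Nonempty)).card
      = (2 * m - 1).choose (t - 1) := by
    rw [← hdegK v hvLN]
    rw [show ((L ∪ N).powersetCard t).filter (fun A => v ∈ A)
        = (((L ∪ N).powersetCard t).filter (fun A => v ∈ A)) from rfl]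
    rw [← Finset.filter_filter, ← Finset.filter_filter,
      Finset.card_filter_add_card_filter_not]
  have hinner : ((L ∪ N).powersetCard t).filter (fun A => v ∈ A ∧ ¬ (A ∩ L).Nonempty)
      = (N.powersetCard t).filter (fun A => v ∈ A) := by
    ext A
    simp only [Finset.mem_filter, Finset.mem_powersetCard, Finset.not_nonempty_iff_eq_empty]
    constructor
    · rintro ⟨⟨hsub, hcard⟩, hvA, hAL⟩
      refine ⟨⟨fun x hx => ?_, hcard⟩, hvA⟩
      rcases Finset.mem_union.1 (hsub hx) with h | h
      · exact absurd (Finset.mem_inter.2 ⟨hx, h⟩) (by simp [hAL])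
      · exact h
    · rintro ⟨⟨hsub, hcard⟩, hvA⟩
      refine ⟨⟨hsub.trans Finset.subset_union_right, hcard⟩, hvA, ?_⟩
      apply Finset.eq_empty_of_forall_notMem
      intro x hx
      rcases Finset.mem_inter.1 hx with ⟨hxA, hxL⟩
      exact (Finset.disjoint_left.1 hLN) hxL (hsub hxA)
  have hinnercard : ((N.powersetCard t).filter (fun A => v ∈ A)).card
      = (m - 1).choose (t - 1) := by
    have h3 : t - 1 + 1 = t := by omega
    rw [← h3, card_filter_mem_pows _ _ hv, hNcard]
    simp
  rw [hinner, hinnercard] at hsplitK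
  rw [← hsplitdeg, hset]
  omega
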